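/- Let f ∈ ℝ[[a,b,x]] be a formal power series every monomial of which has degree at least 2 in b and degree at least 2 in x. Then there is a unique formal power series φ = Σ_{n≥2} φ_n(y,y') xⁿ with coefficients φ_n ∈ ℝ[[y,y']] satisfying the fixed-point equation φ = −f(y − x y' + φ − x ∂_x φ, y' + ∂_x φ, x) (an identity of formal power series in x with coefficients in ℝ[[y,y']]), and every coefficient φ_n is divisible by (y')² in ℝ[[y,y']]. -/

import Mathlib

/- The fixed point equation `φ = −f(y − x y' + φ − x ∂ₓφ, y' + ∂ₓφ, x)`.
   The series `f` lives in ℝ[[a,b,x]] (variables indexed 0,1,2) and `φ` lives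
   in ℝ[[y,y',x]] (y ↦ 0, y' ↦ 1, x ↦ 2). -/

open MvPowerSeries

/-- Substitution of power series (with vanishing constant terms) into a power
series, defined coefficientwise through truncation. -/
noncomputable def substPS {σ τ : Type} [Fintype σ] [DecidableEq σ]
    (s : σ → MvPowerSeries τ ℝ) (g : MvPowerSeries σ ℝ) : MvPowerSeries τ ℝ :=
  fun d => MvPowerSeries.coeff (R := ℝ) d
    (MvPolynomial.aeval s (MvPowerSeries.trunc ℝ
      (Finsupp.equivFunOnFinite.symm (fun _ => (d.sum fun _ k => k) + 1)) g))

/-- Formal partial derivative with respect to the variable `x` (index 2). -/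
noncomputable def dX (φ : MvPowerSeries (Fin 3) ℝ) : MvPowerSeries (Fin 3) ℝ :=
  fun d => ((d 2 : ℝ) + 1) * MvPowerSeries.coeff (R := ℝ) (d + Finsupp.single 2 1) φ

/-- The fixed point equation
`φ = −f(y − x y' + φ − x ∂ₓφ, y' + ∂ₓφ, x)` for `φ ∈ ℝ[[y,y',x]]`. -/
noncomputable def FixedPointEq (f φ : MvPowerSeries (Fin 3) ℝ) : Prop :=
  φ = - substPS
    ![X 0 - X 2 * X 1 + φ - X 2 * dX φ, X 1 + dX φ, (X 2 : MvPowerSeries (Fin 3) ℝ)] f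

namespace Stmt7Aux

noncomputable def sTriple (φ : MvPowerSeries (Fin 3) ℝ) : Fin 3 → MvPowerSeries (Fin 3) ℝ :=
  ![X 0 - X 2 * X 1 + φ - X 2 * dX φ, X 1 + dX φ, (X 2 : MvPowerSeries (Fin 3) ℝ)]

noncomputable def Fop (f φ : MvPowerSeries (Fin 3) ℝ) : MvPowerSeries (Fin 3) ℝ :=
  - substPS (sTriple φ) f

lemma fixedPointEq_iff (f φ : MvPowerSeries (Fin 3) ℝ) :
    FixedPointEq f φ ↔ φ = Fop f φ := Iff.rfl

lemma sTriple0 (φ : MvPowerSeries (Fin 3) ℝ) :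
    sTriple φ 0 = X 0 - X 2 * X 1 + φ - X 2 * dX φ := rfl
lemma sTriple1 (φ : MvPowerSeries (Fin 3) ℝ) : sTriple φ 1 = X 1 + dX φ := rfl
lemma sTriple2 (φ : MvPowerSeries (Fin 3) ℝ) :
    sTriple φ 2 = (X 2 : MvPowerSeries (Fin 3) ℝ) := rfl

def Wge (j : Fin 3) (k : ℕ) (g : MvPowerSeries (Fin 3) ℝ) : Prop :=
  ∀ d : Fin 3 →₀ ℕ, MvPowerSeries.coeff (R := ℝ) d g ≠ 0 → k ≤ d j

lemma Wge.mono {j k k' g} (h : Wge j k g) (hk : k' ≤ k) : Wge j k' g :=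
  fun d hd => hk.trans (h d hd)

lemma wge_zero (j : Fin 3) (k : ℕ) : Wge j k 0 :=
  fun _ hd => absurd (map_zero _) hd

lemma wge_bot (j : Fin 3) (g : MvPowerSeries (Fin 3) ℝ) : Wge j 0 g :=
  fun _ _ => Nat.zero_le _

lemma Wge.add {j k g h} (hg : Wge j k g) (hh : Wge j k h) : Wge j k (g + h) := by
  intro d hd
  rw [map_add] at hd
  by_cases h1 : MvPowerSeries.coeff (R := ℝ) d g = 0
  · exact hh d (by simpa [h1] using hd)
  · exact hg d h1

lemma Wge.neg {j k g} (hg : Wge j k g) : Wge j k (-g) := by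
  intro d hd
  rw [map_neg, neg_ne_zero] at hd
  exact hg d hd

lemma Wge.sub {j k g h} (hg : Wge j k g) (hh : Wge j k h) : Wge j k (g - h) := by
  rw [sub_eq_add_neg]; exact hg.add hh.neg

lemma Wge.mul {j a b g h} (hg : Wge j a g) (hh : Wge j b h) : Wge j (a + b) (g * h) := by
  intro d hd
  rw [MvPowerSeries.coeff_mul] at hd
  obtain ⟨p, hp, hne⟩ := Finset.exists_ne_zero_of_sum_ne_zero hd
  replace hp : p.1 + p.2 = d := by simpa using hp
  have := add_le_add (hg _ (left_ne_zero_of_mul hne)) (hh _ (right_ne_zero_of_mul hne))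
  rwa [← Finsupp.add_apply, hp] at this

lemma Wge.pow {j a g} (hg : Wge j a g) : ∀ k : ℕ, Wge j (k * a) (g ^ k)
  | 0 => by simpa using wge_bot j 1
  | (k + 1) => by
      have := (Wge.pow hg k).mul hg
      rw [← pow_succ] at this
      simpa [Nat.succ_mul] using this

lemma wge_X (j : Fin 3) : Wge j 1 (X j : MvPowerSeries (Fin 3) ℝ) := by
  intro d hd
  rw [MvPowerSeries.coeff_X] at hd
  split at hd
  · subst ‹d = Finsupp.single j 1›; simp
  · exact absurd rfl hd

lemma coeff_dX (φ : MvPowerSeries (Fin 3) ℝ) (d : Fin 3 →₀ ℕ) :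
    MvPowerSeries.coeff (R := ℝ) d (dX φ) =
      ((d 2 : ℝ) + 1) * MvPowerSeries.coeff (R := ℝ) (d + Finsupp.single 2 1) φ := rfl

lemma dX_sub (φ ψ : MvPowerSeries (Fin 3) ℝ) : dX (φ - ψ) = dX φ - dX ψ := by
  ext d
  rw [map_sub, coeff_dX, coeff_dX, coeff_dX, map_sub]
  ring

lemma Wge.dX01 {j : Fin 3} (hj : j ≠ 2) {k φ} (h : Wge j k φ) : Wge j k (dX φ) := by
  intro d hd
  rw [coeff_dX] at hd
  have h2 := h _ (right_ne_zero_of_mul hd)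
  rwa [Finsupp.add_apply, Finsupp.single_apply, if_neg (fun hh => hj hh.symm), add_zero] at h2

lemma Wge.dX2 {k φ} (h : Wge 2 k φ) : Wge 2 (k - 1) (dX φ) := by
  intro d hd
  rw [coeff_dX] at hd
  have h2 := h _ (right_ne_zero_of_mul hd)
  rw [Finsupp.add_apply, Finsupp.single_apply, if_pos rfl] at h2
  omega

lemma coeff_substPS (s : Fin 3 → MvPowerSeries (Fin 3) ℝ) (f : MvPowerSeries (Fin 3) ℝ)
    (d : Fin 3 →₀ ℕ) :
    MvPowerSeries.coeff (R := ℝ) d (substPS s f) =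
      ∑ e ∈ Finset.Iio (Finsupp.equivFunOnFinite.symm (fun _ => (d.sum fun _ k => k) + 1)),
        MvPowerSeries.coeff (R := ℝ) e f * MvPowerSeries.coeff (R := ℝ) d (∏ i, s i ^ e i) := by
  rw [MvPowerSeries.coeff_apply]
  simp only [substPS]
  rw [MvPowerSeries.trunc, MvPowerSeries.truncFinset_apply, map_sum, map_sum]
  refine Finset.sum_congr rfl fun e _ => ?_
  rw [MvPolynomial.aeval_monomial, ← Algebra.smul_def, map_smul, smul_eq_mul,
    Finsupp.prod_fintype _ _ (fun i => pow_zero _)]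


lemma coeff_Fop (f φ : MvPowerSeries (Fin 3) ℝ) (d : Fin 3 →₀ ℕ) :
    MvPowerSeries.coeff (R := ℝ) d (Fop f φ) =
      - ∑ e ∈ Finset.Iio (Finsupp.equivFunOnFinite.symm (fun _ => (d.sum fun _ k => k) + 1)),
        MvPowerSeries.coeff (R := ℝ) e f * MvPowerSeries.coeff (R := ℝ) d (∏ i, sTriple φ i ^ e i) := by
  rw [Fop, map_neg, coeff_substPS]

variable {f : MvPowerSeries (Fin 3) ℝ}
  (hf : ∀ d, MvPowerSeries.coeff (R := ℝ) d f ≠ 0 → 2 ≤ d 1 ∧ 2 ≤ d 2)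

include hf

lemma Fop_wge2 (φ : MvPowerSeries (Fin 3) ℝ) : Wge 2 2 (Fop f φ) := by
  intro d hd
  rw [coeff_Fop, neg_ne_zero] at hd
  obtain ⟨e, _, hne⟩ := Finset.exists_ne_zero_of_sum_ne_zero hd
  have hfe := hf e (left_ne_zero_of_mul hne)
  have hprod : Wge 2 (0 + 0 + e 2 * 1) (∏ i, sTriple φ i ^ e i) := by
    rw [Fin.prod_univ_three]
    exact ((((wge_bot 2 _).pow (e 0)).mono (Nat.zero_le _)).mul
      (((wge_bot 2 _).pow (e 1)).mono (Nat.zero_le _))).mul ((wge_X 2).pow (e 2))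
  have := hprod d (right_ne_zero_of_mul hne)
  omega

lemma Fop_wge1 {φ : MvPowerSeries (Fin 3) ℝ} (hφ : Wge 1 2 φ) : Wge 1 2 (Fop f φ) := by
  intro d hd
  rw [coeff_Fop, neg_ne_zero] at hd
  obtain ⟨e, _, hne⟩ := Finset.exists_ne_zero_of_sum_ne_zero hd
  have hfe := hf e (left_ne_zero_of_mul hne)
  have hs1 : Wge 1 1 (sTriple φ 1) := by
    rw [sTriple1]
    exact (wge_X 1).add ((hφ.dX01 (by decide)).mono (by omega))
  have hprod : Wge 1 (0 + e 1 * 1 + 0) (∏ i, sTriple φ i ^ e i) := by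
    rw [Fin.prod_univ_three]
    exact ((((wge_bot 1 _).pow (e 0)).mono (Nat.zero_le _)).mul
      (hs1.pow (e 1))).mul (((wge_bot 1 _).pow (e 2)).mono (Nat.zero_le _))
  have := hprod d (right_ne_zero_of_mul hne)
  omega

omit hf in
lemma Wge.pow_sub' {j : Fin 3} {m : ℕ} {a b : MvPowerSeries (Fin 3) ℝ}
    (hab : Wge j m (a - b)) (k : ℕ) : Wge j m (a ^ k - b ^ k) := by
  induction k with
  | zero => simpa using wge_zero j m
  | succ k ih =>
      have hring : a ^ (k + 1) - b ^ (k + 1) = a * (a ^ k - b ^ k) + (a - b) * b ^ k := by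
        ring
      rw [hring]
      refine Wge.add ?_ ?_
      · have := (wge_bot j a).mul ih
        simpa using this
      · have := hab.mul (wge_bot j (b ^ k))
        simpa using this

lemma Fop_contract {φ ψ : MvPowerSeries (Fin 3) ℝ} {n : ℕ}
    (h : ∀ d : Fin 3 →₀ ℕ, d 2 < n → MvPowerSeries.coeff (R := ℝ) d φ = MvPowerSeries.coeff (R := ℝ) d ψ) :
    ∀ d : Fin 3 →₀ ℕ, d 2 ≤ n →
      MvPowerSeries.coeff (R := ℝ) d (Fop f φ) = MvPowerSeries.coeff (R := ℝ) d (Fop f ψ) := by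
  have hδ : Wge 2 n (φ - ψ) := by
    intro d' hd'
    by_contra hlt
    push_neg at hlt
    exact hd' (by rw [map_sub, h d' hlt, sub_self])
  have hdδ : Wge 2 (n - 1) (dX (φ - ψ)) := hδ.dX2
  have h0 : Wge 2 (n - 1) (sTriple φ 0 - sTriple ψ 0) := by
    have hr : sTriple φ 0 - sTriple ψ 0 = (φ - ψ) - X 2 * dX (φ - ψ) := by
      rw [sTriple0, sTriple0, dX_sub]; ring
    rw [hr]
    exact (hδ.mono (by omega)).sub (((wge_X 2).mul hdδ).mono (by omega))
  have h1 : Wge 2 (n - 1) (sTriple φ 1 - sTriple ψ 1) := by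
    have hr : sTriple φ 1 - sTriple ψ 1 = dX (φ - ψ) := by
      rw [sTriple1, sTriple1, dX_sub]; ring
    rw [hr]; exact hdδ
  intro d hd
  rw [coeff_Fop, coeff_Fop]
  congr 1
  refine Finset.sum_congr rfl fun e _ => ?_
  by_cases hfe : MvPowerSeries.coeff (R := ℝ) e f = 0
  · rw [hfe, zero_mul, zero_mul]
  have he2 := (hf e hfe).2
  congr 1
  have hdiff : Wge 2 (n + 1)
      ((∏ i, sTriple φ i ^ e i) - (∏ i, sTriple ψ i ^ e i)) := by
    rw [Fin.prod_univ_three, Fin.prod_univ_three, sTriple2, sTriple2]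
    have hr : sTriple φ 0 ^ e 0 * sTriple φ 1 ^ e 1 * (X 2 : MvPowerSeries (Fin 3) ℝ) ^ e 2
        - sTriple ψ 0 ^ e 0 * sTriple ψ 1 ^ e 1 * (X 2 : MvPowerSeries (Fin 3) ℝ) ^ e 2
        = (sTriple φ 0 ^ e 0 - sTriple ψ 0 ^ e 0) *
            (sTriple φ 1 ^ e 1 * (X 2 : MvPowerSeries (Fin 3) ℝ) ^ e 2)
          + sTriple ψ 0 ^ e 0 * ((sTriple φ 1 ^ e 1 - sTriple ψ 1 ^ e 1) *
            (X 2 : MvPowerSeries (Fin 3) ℝ) ^ e 2) := by ring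
    rw [hr]
    have hX : Wge 2 (e 2) ((X 2 : MvPowerSeries (Fin 3) ℝ) ^ e 2) := by
      simpa using (wge_X 2).pow (e 2)
    refine Wge.add ?_ ?_
    · exact (((Wge.pow_sub' h0 (e 0)).mul ((wge_bot 2 _).mul hX)).mono (by omega))
    · exact (((wge_bot 2 _).mul ((Wge.pow_sub' h1 (e 1)).mul hX)).mono (by omega))
  have : MvPowerSeries.coeff (R := ℝ) d
      ((∏ i, sTriple φ i ^ e i) - (∏ i, sTriple ψ i ^ e i)) = 0 := by
    by_contra hc
    have := hdiff d hc
    omega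
  rw [map_sub, sub_eq_zero] at this
  exact this

omit hf

noncomputable def Phi (f : MvPowerSeries (Fin 3) ℝ) : ℕ → MvPowerSeries (Fin 3) ℝ
  | 0 => 0
  | (n + 1) => Fop f (Phi f n)

include hf

lemma Phi_wge (n : ℕ) : Wge 1 2 (Phi f n) ∧ Wge 2 2 (Phi f n) := by
  induction n with
  | zero => exact ⟨wge_zero 1 2, wge_zero 2 2⟩
  | succ n ih =>
      simp only [Phi]
      exact ⟨Fop_wge1 hf ih.1, Fop_wge2 hf _⟩

lemma Phi_step : ∀ n, ∀ d : Fin 3 →₀ ℕ, d 2 < n →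
    MvPowerSeries.coeff (R := ℝ) d (Phi f n) = MvPowerSeries.coeff (R := ℝ) d (Phi f (n + 1)) := by
  intro n
  induction n with
  | zero => intro d hd; omega
  | succ n ih =>
      intro d hd
      simp only [Phi]
      exact Fop_contract hf (fun d' hd' => ih d' hd') d (by omega)

lemma Phi_stable {n m : ℕ} (h : n ≤ m) : ∀ d : Fin 3 →₀ ℕ, d 2 < n →
    MvPowerSeries.coeff (R := ℝ) d (Phi f n) = MvPowerSeries.coeff (R := ℝ) d (Phi f m) := by
  induction m with
  | zero => intro d hd; omega
  | succ m ih =>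
      intro d hd
      rcases Nat.lt_or_ge n (m + 1) with hlt | hge
      · rw [ih (by omega) d hd, Phi_step hf m d (by omega)]
      · have : n = m + 1 := by omega
        rw [this]

omit hf
noncomputable def philim (f : MvPowerSeries (Fin 3) ℝ) : MvPowerSeries (Fin 3) ℝ :=
  fun d => MvPowerSeries.coeff (R := ℝ) d (Phi f (d 2 + 1))

lemma coeff_philim (d : Fin 3 →₀ ℕ) :
    MvPowerSeries.coeff (R := ℝ) d (philim f) = MvPowerSeries.coeff (R := ℝ) d (Phi f (d 2 + 1)) := by
  rw [MvPowerSeries.coeff_apply]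
  simp only [philim]

include hf

lemma philim_agree {N : ℕ} : ∀ d : Fin 3 →₀ ℕ, d 2 < N →
    MvPowerSeries.coeff (R := ℝ) d (philim f) = MvPowerSeries.coeff (R := ℝ) d (Phi f N) := by
  intro d hd
  rw [coeff_philim]
  rcases le_total (d 2 + 1) N with h | h
  · exact Phi_stable hf h d (by omega)
  · exact (Phi_stable hf h d hd).symm

lemma philim_wge : Wge 1 2 (philim f) ∧ Wge 2 2 (philim f) := by
  constructor
  · intro d hd; rw [coeff_philim] at hd; exact (Phi_wge hf (d 2 + 1)).1 d hd
  · intro d hd; rw [coeff_philim] at hd; exact (Phi_wge hf (d 2 + 1)).2 d hd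

lemma philim_fixed : philim f = Fop f (philim f) := by
  ext d
  rw [coeff_philim]
  simp only [Phi]
  exact Fop_contract hf (fun d' hd' => (philim_agree hf d' hd').symm) d le_rfl

lemma fixed_unique {φ ψ : MvPowerSeries (Fin 3) ℝ}
    (hφ : φ = Fop f φ) (hψ : ψ = Fop f ψ) : φ = ψ := by
  have key : ∀ n, ∀ d : Fin 3 →₀ ℕ, d 2 < n →
      MvPowerSeries.coeff (R := ℝ) d φ = MvPowerSeries.coeff (R := ℝ) d ψ := by
    intro n
    induction n with
    | zero => intro d hd; omega
    | succ n ih =>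
        intro d hd
        conv_lhs => rw [hφ]
        conv_rhs => rw [hψ]
        exact Fop_contract hf (fun d' hd' => ih d' hd') d (by omega)
  ext d
  exact key (d 2 + 1) d (by omega)

end Stmt7Aux

open Stmt7Aux

/-- Let `f ∈ ℝ[[a,b,x]]` have every monomial of degree ≥ 2 in `b` and degree
≥ 2 in `x`.  Then there is a unique formal power series
`φ = Σ_{n≥2} φₙ(y,y') xⁿ` (i.e. every monomial of `φ` has `x`-degree ≥ 2)
satisfying `φ = −f(y − x y' + φ − x ∂ₓφ, y' + ∂ₓφ, x)`, and every `φₙ` is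
divisible by `(y')²` (every monomial of `φ` has `y'`-degree ≥ 2). -/
theorem stmt7 (f : MvPowerSeries (Fin 3) ℝ)
    (hf : ∀ d, MvPowerSeries.coeff (R := ℝ) d f ≠ 0 → 2 ≤ d 1 ∧ 2 ≤ d 2) :
    (∃! φ : MvPowerSeries (Fin 3) ℝ,
      (∀ d, MvPowerSeries.coeff (R := ℝ) d φ ≠ 0 → 2 ≤ d 2) ∧ FixedPointEq f φ) ∧
    (∀ φ : MvPowerSeries (Fin 3) ℝ,
      (∀ d, MvPowerSeries.coeff (R := ℝ) d φ ≠ 0 → 2 ≤ d 2) → FixedPointEq f φ →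
      ∀ d, MvPowerSeries.coeff (R := ℝ) d φ ≠ 0 → 2 ≤ d 1) := by
  constructor
  · refine ⟨philim f, ⟨(philim_wge hf).2, (fixedPointEq_iff f _).2 (philim_fixed hf)⟩, ?_⟩
    intro ψ hψ
    exact fixed_unique hf ((fixedPointEq_iff f ψ).1 hψ.2) (philim_fixed hf)
  · intro φ _ hfix d hd
    have : φ = philim f :=
      fixed_unique hf ((fixedPointEq_iff f φ).1 hfix) (philim_fixed hf)
    rw [this] at hd
    exact (philim_wge hf).1 d hd
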